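/- There is a universal constant δ₀ > 0 such that for every positive integer m, every x ∈ {0,1,...,m}, and every 0 ≤ δ ≤ δ₀, one has exp(−δ²/δ₀²) · exp(h(m,x) δ/m) ≤ G_{m,x}(δ/m) / G_{m,x}(0) ≤ exp(h(m,x) δ/m), where G_{m,x}(δ') := IS(m, δ')(x). Moreover, the upper bound holds for all δ ≥ 0. -/

import Mathlib

open Finset

/-- `h(n,x) = 2x² − 2nx + n(n−1)/2`. -/
noncomputable def hIsing (n x : ℕ) : ℝ :=
  2 * (x : ℝ) ^ 2 - 2 * (n : ℝ) * (x : ℝ) + (n : ℝ) * ((n : ℝ) - 1) / 2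

/-- Partition function `Z_n(δ') = Σ_{x=0}^n binom(n,x) exp(h(n,x)δ')`. -/
noncomputable def Zpart (n : ℕ) (δ' : ℝ) : ℝ :=
  ∑ x ∈ Finset.range (n + 1), (n.choose x : ℝ) * Real.exp (hIsing n x * δ')

/-- The pmf of the one-dimensional Ising distribution `IS(n, δ')` at `x`;
`G_{m,x}(δ') = IS(m, δ')(x)`. -/
noncomputable def isingPMF (n : ℕ) (δ' : ℝ) (x : ℕ) : ℝ :=
  (n.choose x : ℝ) * Real.exp (hIsing n x * δ') / Zpart n δ'

section Aux

open MeasureTheory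

lemma integrable_gauss_lin (c : ℝ) :
    MeasureTheory.Integrable (fun u : ℝ => Real.exp (-u^2 + c*u)) := by
  have h : ∀ u : ℝ, Real.exp (-u^2 + c*u) = Real.exp (c^2/4) * Real.exp (-(1:ℝ)*(u - c/2)^2) := by
    intro u; rw [← Real.exp_add]; congr 1; ring
  simp only [h]
  exact (((integrable_exp_neg_mul_sq one_pos).comp_sub_right (c/2)).const_mul _)

lemma integral_gauss_lin (c : ℝ) :
    (∫ u : ℝ, Real.exp (-u^2 + c*u)) = Real.sqrt Real.pi * Real.exp (c^2/4) := by
  have h : ∀ u : ℝ, Real.exp (-u^2 + c*u) = Real.exp (c^2/4) * Real.exp (-(u - c/2)^2) := by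
    intro u; rw [← Real.exp_add]; congr 1; ring
  simp only [h]
  rw [integral_const_mul,
    MeasureTheory.integral_sub_right_eq_self (fun u : ℝ => Real.exp (-u^2)) (c/2)]
  have : (∫ u : ℝ, Real.exp (-u^2)) = Real.sqrt Real.pi := by simpa using integral_gaussian 1
  rw [this, mul_comm]

lemma binom_exp (m : ℕ) (r u : ℝ) :
    ∑ x ∈ Finset.range (m+1), (m.choose x : ℝ) * Real.exp (2*r*(2*(x:ℝ)-m)*u)
      = (Real.exp (2*r*u) + Real.exp (-(2*r*u)))^m := by
  rw [add_pow]
  refine Finset.sum_congr rfl fun x hx => ?_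
  have hx' : x ≤ m := Finset.mem_range_succ_iff.mp hx
  rw [mul_comm]
  congr 1
  rw [← Real.exp_nat_mul, ← Real.exp_nat_mul, ← Real.exp_add]
  congr 1
  push_cast [Nat.cast_sub hx']
  ring

lemma key_bound (m : ℕ) (hm : 0 < m) {δ : ℝ} (h0 : 0 ≤ δ) (h1 : δ ≤ 1/2) :
    ∑ x ∈ Finset.range (m+1), (m.choose x : ℝ) * Real.exp (δ/(2*m) * (2*(x:ℝ)-m)^2)
      ≤ 2^m / Real.sqrt (1-δ) := by
  have hmR : (0:ℝ) < m := by exact_mod_cast hm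
  set r := Real.sqrt (δ/(2*m)) with hr
  have hr2 : r^2 = δ/(2*m) := Real.sq_sqrt (by positivity)
  have hπ : Real.sqrt Real.pi ≠ 0 := ne_of_gt (Real.sqrt_pos.mpr Real.pi_pos)
  have hterm : ∀ x : ℕ, Real.exp (δ/(2*m) * (2*(x:ℝ)-m)^2)
      = (Real.sqrt Real.pi)⁻¹ * ∫ u : ℝ, Real.exp (-u^2 + (2*r*(2*(x:ℝ)-m))*u) := by
    intro x
    have h4 : (2*r*(2*(x:ℝ)-m))^2/4 = δ/(2*m) * (2*(x:ℝ)-m)^2 := by rw [← hr2]; ring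
    rw [integral_gauss_lin, h4, ← mul_assoc, inv_mul_cancel₀ hπ, one_mul]
  calc ∑ x ∈ Finset.range (m+1), (m.choose x : ℝ) * Real.exp (δ/(2*m) * (2*(x:ℝ)-m)^2)
      = (Real.sqrt Real.pi)⁻¹ *
        ∫ u : ℝ, ∑ x ∈ Finset.range (m+1),
          (m.choose x : ℝ) * Real.exp (-u^2 + (2*r*(2*(x:ℝ)-m))*u) := by
        rw [integral_finset_sum _ (fun x _ => (integrable_gauss_lin _).const_mul _),
          Finset.mul_sum]
        refine Finset.sum_congr rfl fun x _ => ?_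
        rw [hterm x, integral_const_mul]; ring
    _ ≤ (Real.sqrt Real.pi)⁻¹ * ∫ u : ℝ, 2^m * Real.exp (-(1-δ)*u^2) := by
        have h1δ : (0:ℝ) < 1 - δ := by linarith
        refine mul_le_mul_of_nonneg_left ?_ (by positivity)
        refine integral_mono
          (integrable_finset_sum _ (fun x _ => (integrable_gauss_lin _).const_mul _))
          ((integrable_exp_neg_mul_sq h1δ).const_mul _) (fun u => ?_)
        have hsum : ∑ x ∈ Finset.range (m+1),
            (m.choose x : ℝ) * Real.exp (-u^2 + (2*r*(2*(x:ℝ)-m))*u)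
            = Real.exp (-u^2) * (Real.exp (2*r*u) + Real.exp (-(2*r*u)))^m := by
          rw [← binom_exp m r u, Finset.mul_sum]
          refine Finset.sum_congr rfl fun x _ => ?_
          rw [Real.exp_add]; ring
        rw [hsum]
        have hcosh : Real.exp (2*r*u) + Real.exp (-(2*r*u)) = 2 * Real.cosh (2*r*u) := by
          rw [Real.cosh_eq]; ring
        have hb : (Real.exp (2*r*u) + Real.exp (-(2*r*u)))^m ≤ 2^m * Real.exp (δ*u^2) := by
          rw [hcosh, mul_pow]
          refine mul_le_mul_of_nonneg_left ?_ (by positivity)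
          calc Real.cosh (2*r*u) ^ m ≤ (Real.exp ((2*r*u)^2/2))^m :=
                pow_le_pow_left₀ ((Real.cosh_pos _).le) (Real.cosh_le_exp_half_sq _) m
            _ = Real.exp (δ*u^2) := by
                rw [← Real.exp_nat_mul]
                congr 1
                have : ((2*r*u)^2/2) = 2*r^2*u^2 := by ring
                rw [this, hr2]
                field_simp
        calc Real.exp (-u^2) * (Real.exp (2*r*u) + Real.exp (-(2*r*u)))^m
            ≤ Real.exp (-u^2) * (2^m * Real.exp (δ*u^2)) :=
              mul_le_mul_of_nonneg_left hb (Real.exp_nonneg _)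
          _ = 2^m * (Real.exp (-u^2) * Real.exp (δ*u^2)) := by ring
          _ = 2^m * Real.exp (-(1-δ)*u^2) := by rw [← Real.exp_add]; ring_nf
    _ = 2^m / Real.sqrt (1-δ) := by
        have h1δ : (0:ℝ) < 1 - δ := by linarith
        rw [integral_const_mul, integral_gaussian,
          Real.sqrt_div (le_of_lt Real.pi_pos)]
        field_simp

lemma choose_succ_cast (n y : ℕ) :
    ((n+1).choose (y+1) : ℝ) * (y+1) = (n+1) * (n.choose y : ℝ) := by
  have h := Nat.add_one_mul_choose_eq n y
  have : ((n+1) * n.choose y : ℕ) = ((n+1).choose (y+1) * (y+1) : ℕ) := h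
  exact_mod_cast this.symm

lemma sum_choose_cast (n : ℕ) : ∑ x ∈ Finset.range (n+1), (n.choose x : ℝ) = 2^n := by
  exact_mod_cast congrArg (Nat.cast : ℕ → ℝ) (Nat.sum_range_choose n)

lemma L1 (m : ℕ) : ∑ x ∈ Finset.range (m+1), (m.choose x : ℝ) * x = m * 2^m / 2 := by
  cases m with
  | zero => simp
  | succ n =>
    rw [Finset.sum_range_succ']
    simp only [Nat.cast_zero, mul_zero, add_zero]
    have : ∀ y ∈ Finset.range (n+1),
        ((n+1).choose (y+1) : ℝ) * ((y:ℝ)+1) = (n+1) * (n.choose y : ℝ) := by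
      intro y _
      have := choose_succ_cast n y
      push_cast at this ⊢
      linarith
    push_cast
    rw [Finset.sum_congr rfl this, ← Finset.mul_sum, sum_choose_cast]
    push_cast
    ring

lemma L2 (n : ℕ) : ∑ x ∈ Finset.range (n+2), ((n+1).choose x : ℝ) * x * ((x:ℝ)-1)
    = (n+1) * (n * 2^n / 2) := by
  rw [Finset.sum_range_succ']
  simp only [Nat.cast_zero, mul_zero, zero_mul, add_zero]
  have : ∀ y ∈ Finset.range (n+1),
      ((n+1).choose (y+1) : ℝ) * ((y:ℝ)+1) * (((y:ℝ)+1)-1) = (n+1) * ((n.choose y : ℝ) * y) := by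
    intro y _
    have := choose_succ_cast n y
    push_cast at this ⊢
    nlinarith [this]
  push_cast
  rw [Finset.sum_congr rfl this, ← Finset.mul_sum, L1 n]

lemma hsum_zero (m : ℕ) : ∑ x ∈ Finset.range (m+1), (m.choose x : ℝ) * hIsing m x = 0 := by
  cases m with
  | zero => simp [hIsing]
  | succ n =>
    have expand : ∀ x ∈ Finset.range (n+2), ((n+1).choose x : ℝ) * hIsing (n+1) x
        = 2*(((n+1).choose x : ℝ) * x * ((x:ℝ)-1)) - 2*n*(((n+1).choose x : ℝ)*x)
          + ((n:ℝ)+1)*n/2 * ((n+1).choose x : ℝ) := by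
      intro x _
      unfold hIsing
      push_cast
      ring
    rw [Finset.sum_congr rfl expand, Finset.sum_add_distrib, Finset.sum_sub_distrib,
      ← Finset.mul_sum, ← Finset.mul_sum, ← Finset.mul_sum, L2, L1, sum_choose_cast]
    push_cast
    ring

lemma Zpart_pos (n : ℕ) (δ' : ℝ) : 0 < Zpart n δ' := by
  unfold Zpart
  refine Finset.sum_pos (fun x hx => ?_) ⟨0, by simp⟩
  have hc : 0 < n.choose x := Nat.choose_pos (Finset.mem_range_succ_iff.mp hx)
  have hc' : (0:ℝ) < n.choose x := by exact_mod_cast hc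
  positivity

lemma Zpart_zero (n : ℕ) : Zpart n 0 = 2^n := by
  unfold Zpart
  simp only [mul_zero, Real.exp_zero, mul_one]
  exact sum_choose_cast n

lemma Zpart_ge (n : ℕ) (δ' : ℝ) : (2:ℝ)^n ≤ Zpart n δ' := by
  unfold Zpart
  have hle : ∀ x ∈ Finset.range (n+1),
      (n.choose x : ℝ) * (1 + hIsing n x * δ') ≤ (n.choose x : ℝ) * Real.exp (hIsing n x * δ') :=
    fun x _ => mul_le_mul_of_nonneg_left
      (by linarith [Real.add_one_le_exp (hIsing n x * δ')]) (Nat.cast_nonneg _)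
  have heq : ∑ x ∈ Finset.range (n+1), (n.choose x : ℝ) * (1 + hIsing n x * δ') = 2^n := by
    have : ∀ x ∈ Finset.range (n+1), (n.choose x : ℝ) * (1 + hIsing n x * δ')
        = (n.choose x : ℝ) + δ' * ((n.choose x : ℝ) * hIsing n x) := by
      intro x _; ring
    rw [Finset.sum_congr rfl this, Finset.sum_add_distrib, ← Finset.mul_sum,
      sum_choose_cast, hsum_zero, mul_zero, add_zero]
  calc (2:ℝ)^n = ∑ x ∈ Finset.range (n+1), (n.choose x : ℝ) * (1 + hIsing n x * δ') := heq.symm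
    _ ≤ _ := Finset.sum_le_sum hle

lemma Zpart_le (m : ℕ) (hm : 0 < m) {δ : ℝ} (h0 : 0 ≤ δ) (h1 : δ ≤ 1/2) :
    Zpart m (δ/m) ≤ 2^m * Real.exp (4*δ^2) := by
  have hmR : (0:ℝ) < m := by exact_mod_cast hm
  have step1 : Zpart m (δ/m)
      = Real.exp (-(δ/2)) * ∑ x ∈ Finset.range (m+1),
          (m.choose x : ℝ) * Real.exp (δ/(2*m) * (2*(x:ℝ)-m)^2) := by
    unfold Zpart
    rw [Finset.mul_sum]
    refine Finset.sum_congr rfl fun x _ => ?_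
    rw [show Real.exp (-(δ/2)) * ((m.choose x : ℝ) * Real.exp (δ/(2*m) * (2*(x:ℝ)-m)^2))
        = (m.choose x : ℝ) * (Real.exp (-(δ/2)) * Real.exp (δ/(2*m) * (2*(x:ℝ)-m)^2)) from by ring,
      ← Real.exp_add]
    congr 2
    unfold hIsing
    field_simp
    ring
  have hsqrt : Real.exp (-(δ/2 + 4*δ^2)) ≤ Real.sqrt (1-δ) := by
    refine (Real.le_sqrt' (Real.exp_pos _)).mpr ?_
    rw [← Real.exp_nat_mul]
    have hz : Real.exp ((2:ℕ) * -(δ/2 + 4*δ^2)) = Real.exp (-(δ + 8*δ^2)) := by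
      congr 1; push_cast; ring
    rw [hz]
    -- exp(-(δ+8δ²)) ≤ 1-δ
    have hb := Real.add_one_le_exp (δ + 8*δ^2)
    have hmul : Real.exp (-(δ + 8*δ^2)) * Real.exp (δ + 8*δ^2) = 1 := by
      rw [← Real.exp_add, show -(δ + 8*δ^2) + (δ + 8*δ^2) = 0 from by ring, Real.exp_zero]
    nlinarith [Real.exp_pos (-(δ + 8*δ^2)), Real.exp_pos (δ + 8*δ^2)]
  have hkey := key_bound m hm h0 h1
  have hs_pos : (0:ℝ) < Real.sqrt (1-δ) := Real.sqrt_pos.mpr (by linarith)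
  calc Zpart m (δ/m) = Real.exp (-(δ/2)) * ∑ x ∈ Finset.range (m+1),
          (m.choose x : ℝ) * Real.exp (δ/(2*m) * (2*(x:ℝ)-m)^2) := step1
    _ ≤ Real.exp (-(δ/2)) * (2^m / Real.sqrt (1-δ)) :=
        mul_le_mul_of_nonneg_left hkey (Real.exp_nonneg _)
    _ ≤ Real.exp (-(δ/2)) * (2^m / Real.exp (-(δ/2 + 4*δ^2))) := by
        refine mul_le_mul_of_nonneg_left ?_ (Real.exp_nonneg _)
        exact div_le_div_of_nonneg_left (by positivity) (Real.exp_pos _) hsqrt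
    _ = 2^m * Real.exp (4*δ^2) := by
        rw [show Real.exp (-(δ/2)) * ((2:ℝ)^m / Real.exp (-(δ/2 + 4*δ^2)))
            = 2^m * (Real.exp (-(δ/2)) / Real.exp (-(δ/2 + 4*δ^2))) from by ring,
          ← Real.exp_sub]
        congr 2
        ring

end Aux

/-- Two-sided ratio bound for the one-dimensional Ising pmf:
`exp(−δ²/δ₀²)·exp(h(m,x)δ/m) ≤ G_{m,x}(δ/m)/G_{m,x}(0) ≤ exp(h(m,x)δ/m)`,
the lower bound for `0 ≤ δ ≤ δ₀` and the upper bound for all `δ ≥ 0`. -/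
theorem ising_ratio_bound :
    ∃ δ₀ : ℝ, 0 < δ₀ ∧
    ∀ (m x : ℕ) (δ : ℝ), 0 < m → x ≤ m →
      ((0 ≤ δ → δ ≤ δ₀ →
        Real.exp (-(δ ^ 2 / δ₀ ^ 2)) * Real.exp (hIsing m x * (δ / m)) ≤
          isingPMF m (δ / m) x / isingPMF m 0 x) ∧
       (0 ≤ δ →
        isingPMF m (δ / m) x / isingPMF m 0 x ≤
          Real.exp (hIsing m x * (δ / m)))) := by
  refine ⟨1/2, by norm_num, fun m x δ hm hx => ?_⟩
  have hC : (0:ℝ) < m.choose x := by exact_mod_cast Nat.choose_pos hx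
  have hZd := Zpart_pos m (δ/m)
  have hZ0 := Zpart_pos m 0
  have hratio : isingPMF m (δ/m) x / isingPMF m 0 x
      = Real.exp (hIsing m x * (δ/m)) * (Zpart m 0 / Zpart m (δ/m)) := by
    unfold isingPMF
    rw [mul_zero, Real.exp_zero, mul_one]
    field_simp
  constructor
  · intro h0 h1
    rw [hratio, Zpart_zero]
    have hle := Zpart_le m hm h0 h1
    have hdiv : Real.exp (-(4*δ^2)) ≤ (2:ℝ)^m / Zpart m (δ/m) := by
      rw [le_div_iff₀ hZd]
      calc Real.exp (-(4*δ^2)) * Zpart m (δ/m)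
          ≤ Real.exp (-(4*δ^2)) * (2^m * Real.exp (4*δ^2)) :=
            mul_le_mul_of_nonneg_left hle (Real.exp_nonneg _)
        _ = 2^m * (Real.exp (-(4*δ^2)) * Real.exp (4*δ^2)) := by ring
        _ = 2^m := by
            rw [← Real.exp_add, show -(4*δ^2)+(4*δ^2) = 0 from by ring, Real.exp_zero, mul_one]
    have heq : Real.exp (-(δ^2/(1/2:ℝ)^2)) = Real.exp (-(4*δ^2)) := by congr 1; ring
    rw [heq, mul_comm (Real.exp (-(4*δ^2)))]
    exact mul_le_mul_of_nonneg_left hdiv (Real.exp_nonneg _)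
  · intro _
    rw [hratio]
    have hle1 : Zpart m 0 / Zpart m (δ/m) ≤ 1 := by
      rw [div_le_one hZd, Zpart_zero]
      exact Zpart_ge m (δ/m)
    calc Real.exp (hIsing m x * (δ/m)) * (Zpart m 0 / Zpart m (δ/m))
        ≤ Real.exp (hIsing m x * (δ/m)) * 1 :=
          mul_le_mul_of_nonneg_left hle1 (Real.exp_nonneg _)
      _ = _ := mul_one _
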